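/- arXiv:2410.14190 — 2 statements merged into one kernel-verified Lean document; each statement's English description precedes it below -/
import Mathlib

section
/- For |q|<1, ∑_{n≥0} q^{2n+1} (q^{2n+6};q^2)_∞ (q^{2n+2};q^2)_∞ / (q^{2n+1};q^2)_∞^2 = q(1+q+q^2-q^3)/((1-q)(1-q^3)^2). -/
open scoped BigOperators

noncomputable def qPoch (a q : ℂ) (n : ℕ) : ℂ := ∏ j ∈ Finset.range n, (1 - a * q ^ j)

noncomputable def qPochInf (a q : ℂ) : ℂ := ∏' j : ℕ, (1 - a * q ^ j)

namespace Stmt16Aux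

open Filter Topology

variable {q : ℂ}

lemma qpow_lt (hq : ‖q‖ < 1) (k : ℕ) (hk : 1 ≤ k) : ‖q ^ k‖ < 1 := by
  rw [norm_pow]
  calc ‖q‖ ^ k ≤ ‖q‖ ^ 1 := pow_le_pow_of_le_one (norm_nonneg q) hq.le hk
  _ = ‖q‖ := pow_one _
  _ < 1 := hq

lemma pow_comb (k j : ℕ) : q ^ k * (q ^ 2) ^ j = q ^ (k + 2 * j) := by
  rw [← pow_mul, ← pow_add]

lemma fac_ne (hq : ‖q‖ < 1) (k j : ℕ) (hk : 1 ≤ k) :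
    (1 : ℂ) - q ^ k * (q ^ 2) ^ j ≠ 0 := by
  rw [pow_comb]
  intro h
  have h1 : q ^ (k + 2 * j) = 1 := by linear_combination -h
  have := qpow_lt hq (k + 2 * j) (le_add_right hk)
  rw [h1] at this; simp at this

lemma sum_log (hq : ‖q‖ < 1) (k : ℕ) :
    Summable fun j : ℕ => Complex.log (1 - q ^ k * (q ^ 2) ^ j) := by
  have h2 : ‖q ^ 2‖ < 1 := by
    rcases eq_or_ne q 0 with rfl | hq0
    · simp
    · exact qpow_lt hq 2 one_le_two
  have hg : Summable fun j : ℕ => (3 / 2 : ℝ) * ‖q ^ k‖ * ‖q ^ 2‖ ^ j := by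
    have : ‖(‖q ^ 2‖ : ℝ)‖ < 1 := by rwa [Real.norm_eq_abs, abs_of_nonneg (norm_nonneg _)]
    exact (summable_geometric_of_norm_lt_one this).mul_left _
  apply Summable.of_norm_bounded_eventually_nat hg
  have h0 : Tendsto (fun j : ℕ => ‖q ^ k‖ * ‖q ^ 2‖ ^ j) atTop (𝓝 0) := by
    simpa using (tendsto_pow_atTop_nhds_zero_of_lt_one (norm_nonneg _) h2).const_mul ‖q ^ k‖
  filter_upwards [h0.eventually_le_const (by norm_num : (0:ℝ) < 1/2)] with j hj
  have hzn : ‖-(q ^ k * (q ^ 2) ^ j)‖ ≤ 1 / 2 := by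
    rw [norm_neg, norm_mul, norm_pow, norm_pow]
    simpa [norm_pow] using hj
  have hb := Complex.norm_log_one_add_half_le_self hzn
  rw [sub_eq_add_neg]
  calc ‖Complex.log (1 + -(q ^ k * (q ^ 2) ^ j))‖ ≤ 3 / 2 * ‖-(q ^ k * (q ^ 2) ^ j)‖ := hb
  _ = 3 / 2 * ‖q ^ k‖ * ‖q ^ 2‖ ^ j := by
      rw [norm_neg, norm_mul, norm_pow, norm_pow, norm_pow]; ring

lemma multi (hq : ‖q‖ < 1) (k : ℕ) (hk : 1 ≤ k) :
    Multipliable fun j : ℕ => (1 : ℂ) - q ^ k * (q ^ 2) ^ j := by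
  exact Complex.multipliable_of_summable_log (sum_log hq k)

lemma poch_ne (hq : ‖q‖ < 1) (k : ℕ) (hk : 1 ≤ k) :
    qPochInf (q ^ k) (q ^ 2) ≠ 0 := by
  have h2 : Complex.exp (∑' j : ℕ, Complex.log (1 - q ^ k * (q ^ 2) ^ j)) =
      ∏' j : ℕ, ((1 : ℂ) - q ^ k * (q ^ 2) ^ j) :=
    Complex.cexp_tsum_eq_tprod (fun j => fac_ne hq k j hk) (sum_log hq k)
  rw [qPochInf]
  rw [← h2]
  exact Complex.exp_ne_zero _

set_option maxHeartbeats 1000000 in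
lemma peel (hq : ‖q‖ < 1) (k : ℕ) (hk : 1 ≤ k) :
    qPochInf (q ^ k) (q ^ 2) = (1 - q ^ k) * qPochInf (q ^ (k + 2)) (q ^ 2) := by
  have hkey : ∀ j : ℕ, (1 : ℂ) - q ^ k * (q ^ 2) ^ (j + 1) = 1 - q ^ (k + 2) * (q ^ 2) ^ j := by
    intro j
    rw [pow_comb, pow_comb]
    congr 2
    omega
  have hm : Multipliable fun j : ℕ => (1 : ℂ) - q ^ k * (q ^ 2) ^ (j + 1) :=
    (multi hq (k + 2) (by omega)).congr fun j => (hkey j).symm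
  have h1 : (∏' j : ℕ, ((1 : ℂ) - q ^ k * (q ^ 2) ^ j)) =
      (1 - q ^ k * (q ^ 2) ^ 0) * ∏' j : ℕ, ((1 : ℂ) - q ^ k * (q ^ 2) ^ (j + 1)) :=
    tprod_eq_zero_mul' hm
  have h2 : (∏' j : ℕ, ((1 : ℂ) - q ^ k * (q ^ 2) ^ (j + 1))) =
      ∏' j : ℕ, ((1 : ℂ) - q ^ (k + 2) * (q ^ 2) ^ j) := tprod_congr hkey
  rw [qPochInf, h1, h2, qPochInf, pow_zero, mul_one]

lemma partial_prod (hq : ‖q‖ < 1) (k : ℕ) (hk : 1 ≤ k) (n : ℕ) :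
    qPochInf (q ^ k) (q ^ 2) =
      (∏ j ∈ Finset.range n, (1 - q ^ k * (q ^ 2) ^ j)) * qPochInf (q ^ (k + 2 * n)) (q ^ 2) := by
  induction n with
  | zero => simp
  | succ n ih =>
    rw [ih, Finset.prod_range_succ, peel hq (k + 2 * n) (by omega)]
    have : q ^ (k + 2 * n + 2) = q ^ (k + 2 * (n + 1)) := by
      rw [show k + 2 * n + 2 = k + 2 * (n + 1) by omega]
    rw [this, pow_comb]
    ring

lemma tendsto_partial (hq : ‖q‖ < 1) (k : ℕ) (hk : 1 ≤ k) :
    Tendsto (fun n => ∏ j ∈ Finset.range n, ((1 : ℂ) - q ^ k * (q ^ 2) ^ j)) atTop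
      (𝓝 (qPochInf (q ^ k) (q ^ 2))) :=
  (multi hq k hk).hasProd.tendsto_prod_nat

lemma tendsto_tail (hq : ‖q‖ < 1) (k : ℕ) (hk : 1 ≤ k) :
    Tendsto (fun n => qPochInf (q ^ (k + 2 * n)) (q ^ 2)) atTop (𝓝 1) := by
  have hne := poch_ne hq k hk
  have hpne : ∀ n, (∏ j ∈ Finset.range n, ((1 : ℂ) - q ^ k * (q ^ 2) ^ j)) ≠ 0 :=
    fun n => Finset.prod_ne_zero_iff.2 fun j _ => fac_ne hq k j hk
  have heq : ∀ n, qPochInf (q ^ (k + 2 * n)) (q ^ 2) =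
      qPochInf (q ^ k) (q ^ 2) / (∏ j ∈ Finset.range n, ((1 : ℂ) - q ^ k * (q ^ 2) ^ j)) := by
    intro n
    rw [eq_div_iff (hpne n), mul_comm]
    exact (partial_prod hq k hk n).symm
  have := Tendsto.div (tendsto_const_nhds (x := qPochInf (q ^ k) (q ^ 2)))
    (tendsto_partial hq k hk) hne
  rw [div_self hne] at this
  exact this.congr fun n => (heq n).symm

noncomputable def Fp (q a : ℂ) : ℂ :=
    (-q - q^2 - q^3 + q^4)
    + (1 + q + 3*q^2 + q^3 + 3*q^4 + q^5 + 2*q^6 - 2*q^7) * a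
    + (-2*q - 2*q^2 - 4*q^3 - 2*q^4 - 6*q^5 - 2*q^6 - 3*q^7 + q^8 - q^9 + q^10) * a^2
    + (q^2 + q^3 + 4*q^4 + 4*q^5 + 5*q^6 + q^7 + 3*q^8 + q^9 + q^10 - q^11) * a^3
    + (-2*q^5 - 2*q^6 - 2*q^7 - 2*q^8 - 2*q^9) * a^4
    + (q^8 + q^9) * a^5

lemma Fp_at_q (q : ℂ) : Fp q q = 0 := by unfold Fp; ring

lemma Fp_at_zero (q : ℂ) : Fp q 0 = -q - q^2 - q^3 + q^4 := by unfold Fp; ring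

lemma Fp_cont (q : ℂ) : Continuous (Fp q) := by unfold Fp; fun_prop

set_option maxHeartbeats 2000000 in
lemma tel_alg (q a u v : ℂ) (hv : v ≠ 0) (h5 : 1 - a*q^5 ≠ 0) :
    (1-q)*(1-q^3)^2 * (a * u * ((1-a*q)*((1-a*q^3)*u)) / v^2)
    = Fp q a * (u/v)^2 - Fp q (a*q^2) * ((u/(1-a*q^5)) / (v/(1-a)))^2 := by
  unfold Fp
  rw [div_div_div_eq, div_pow, div_pow, mul_div_assoc', mul_div_assoc', mul_div_assoc',
    div_sub_div _ _ (pow_ne_zero 2 hv) (pow_ne_zero 2 (mul_ne_zero h5 hv)),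
    div_eq_div_iff (pow_ne_zero 2 hv)
      (mul_ne_zero (pow_ne_zero 2 hv) (pow_ne_zero 2 (mul_ne_zero h5 hv)))]
  ring

end Stmt16Aux

open Stmt16Aux Filter Topology

theorem stmt_16 (q : ℂ) (hq : ‖q‖ < 1) :
    (∑' n : ℕ, q ^ (2 * n + 1) * qPochInf (q ^ (2 * n + 6)) (q ^ 2) *
        qPochInf (q ^ (2 * n + 2)) (q ^ 2) / (qPochInf (q ^ (2 * n + 1)) (q ^ 2)) ^ 2) =
      q * (1 + q + q ^ 2 - q ^ 3) / ((1 - q) * (1 - q ^ 3) ^ 2) := by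
  have h2 : ‖q ^ 2‖ < 1 := by
    rcases eq_or_ne q 0 with rfl | hq0
    · simp
    · exact qpow_lt hq 2 one_le_two
  have hone : ∀ k : ℕ, 1 ≤ k → (1 : ℂ) - q ^ k ≠ 0 := by
    intro k hk
    have := fac_ne hq k 0 hk
    simpa using this
  have hΔ1 : (1 : ℂ) - q ≠ 0 := by have := hone 1 le_rfl; simpa using this
  have hΔ3 : (1 : ℂ) - q ^ 3 ≠ 0 := hone 3 (by omega)
  set S : ℕ → ℂ := fun n => q ^ (2 * n + 1) * qPochInf (q ^ (2 * n + 6)) (q ^ 2) *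
        qPochInf (q ^ (2 * n + 2)) (q ^ 2) / (qPochInf (q ^ (2 * n + 1)) (q ^ 2)) ^ 2 with hSdef
  set G : ℕ → ℂ := fun n => Fp q (q ^ (2 * n + 1)) *
      (qPochInf (q ^ (2 * n + 6)) (q ^ 2) / qPochInf (q ^ (2 * n + 1)) (q ^ 2)) ^ 2 with hGdef
  have hne : ∀ k : ℕ, 1 ≤ k → qPochInf (q ^ k) (q ^ 2) ≠ 0 := fun k hk => poch_ne hq k hk
  have e22 : ∀ n : ℕ, qPochInf (q ^ (2*n+2)) (q^2)
      = (1 - q^(2*n+2)) * ((1 - q^(2*n+4)) * qPochInf (q ^ (2*n+6)) (q^2)) := by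
    intro n
    rw [peel hq (2*n+2) (by omega), show 2*n+2+2 = 2*n+4 from by omega,
        peel hq (2*n+4) (by omega), show 2*n+4+2 = 2*n+6 from by omega]
  have e3 : ∀ n : ℕ, qPochInf (q ^ (2*(n+1)+1)) (q^2)
      = qPochInf (q ^ (2*n+1)) (q^2) / (1 - q^(2*n+1)) := by
    intro n
    rw [eq_div_iff (hone (2*n+1) (by omega)), mul_comm,
        show 2*(n+1)+1 = 2*n+1+2 from by omega]
    exact (peel hq (2*n+1) (by omega)).symm
  have e4 : ∀ n : ℕ, qPochInf (q ^ (2*(n+1)+6)) (q^2)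
      = qPochInf (q ^ (2*n+6)) (q^2) / (1 - q^(2*n+6)) := by
    intro n
    rw [eq_div_iff (hone (2*n+6) (by omega)), mul_comm,
        show 2*(n+1)+6 = 2*n+6+2 from by omega]
    exact (peel hq (2*n+6) (by omega)).symm
  have ha1 : ∀ n : ℕ, q ^ (2*n+2) = q^(2*n+1) * q := fun n => by rw [pow_succ]
  have ha3 : ∀ n : ℕ, q ^ (2*n+4) = q^(2*n+1) * q^3 := fun n => by
    rw [show 2*n+4 = (2*n+1)+3 from by omega, pow_add]
  have ha5 : ∀ n : ℕ, q ^ (2*n+6) = q^(2*n+1) * q^5 := fun n => by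
    rw [show 2*n+6 = (2*n+1)+5 from by omega, pow_add]
  have ha2 : ∀ n : ℕ, q ^ (2*(n+1)+1) = q^(2*n+1) * q^2 := fun n => by
    rw [show 2*(n+1)+1 = (2*n+1)+2 from by omega, pow_add]
  have h5ne : ∀ n : ℕ, (1 : ℂ) - q^(2*n+1) * q^5 ≠ 0 := by
    intro n
    rw [← ha5 n]
    exact hone (2*n+6) (by omega)
  have htel : ∀ n : ℕ, (1-q)*(1-q^3)^2 * S n = G n - G (n + 1) := by
    intro n
    simp only [hSdef, hGdef]
    rw [e22 n, e3 n, e4 n, ha1 n, ha3 n, ha5 n, ha2 n]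
    exact tel_alg q (q^(2*n+1)) _ _ (hne (2*n+1) (by omega)) (h5ne n)
  have htail1 : Tendsto (fun n => qPochInf (q ^ (2*n+1)) (q^2)) atTop (𝓝 1) :=
    (tendsto_tail hq 1 le_rfl).congr fun n => by rw [show 1 + 2*n = 2*n+1 from by omega]
  have htail6 : Tendsto (fun n => qPochInf (q ^ (2*n+6)) (q^2)) atTop (𝓝 1) :=
    (tendsto_tail hq 6 (by omega)).congr fun n => by rw [show 6 + 2*n = 2*n+6 from by omega]
  have hR : Tendsto (fun n => qPochInf (q^(2*n+6)) (q^2) / qPochInf (q^(2*n+1)) (q^2))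
      atTop (𝓝 1) := by
    simpa [Pi.div_def] using htail6.div htail1 one_ne_zero
  have hxpow : ∀ c : ℕ, Tendsto (fun n : ℕ => q ^ (2*n+c)) atTop (𝓝 0) := by
    intro c
    have heq : ∀ n : ℕ, q ^ (2*n+c) = q^c * (q^2)^n := by
      intro n
      rw [pow_comb, show c + 2*n = 2*n+c from by omega]
    have hg := (tendsto_pow_atTop_nhds_zero_of_norm_lt_one h2).const_mul (q^c)
    rw [mul_zero] at hg
    exact hg.congr fun n => (heq n).symm
  have hG : Tendsto G atTop (𝓝 ((-q - q^2 - q^3 + q^4) * 1 ^ 2)) := by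
    have h1 : Tendsto (fun n : ℕ => Fp q (q ^ (2*n+1))) atTop (𝓝 (Fp q 0)) :=
      ((Fp_cont q).tendsto 0).comp (hxpow 1)
    rw [Fp_at_zero] at h1
    exact h1.mul (hR.pow 2)
  have hSc : ∀ n : ℕ, S n = q^(2*n+1) * ((1 - q^(2*n+2)) * (1 - q^(2*n+4)) *
      (qPochInf (q^(2*n+6)) (q^2) / qPochInf (q^(2*n+1)) (q^2))^2) := by
    intro n
    simp only [hSdef]
    rw [e22 n]
    field_simp [hne (2*n+1) (by omega)]
  have hc : Tendsto (fun n : ℕ => (1 - q^(2*n+2)) * (1 - q^(2*n+4)) *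
      (qPochInf (q^(2*n+6)) (q^2) / qPochInf (q^(2*n+1)) (q^2))^2) atTop (𝓝 (1*1*1^2)) := by
    have t2 : Tendsto (fun n : ℕ => (1:ℂ) - q^(2*n+2)) atTop (𝓝 1) := by
      simpa using tendsto_const_nhds.sub (hxpow 2)
    have t4 : Tendsto (fun n : ℕ => (1:ℂ) - q^(2*n+4)) atTop (𝓝 1) := by
      simpa using tendsto_const_nhds.sub (hxpow 4)
    exact (t2.mul t4).mul (hR.pow 2)
  have hbound : ∀ᶠ n in atTop, ‖S n‖ ≤ 2 * ‖q‖^(2*n+1) := by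
    have hev := (hc.norm).eventually_le_const
      (show ‖(1:ℂ)*1*1^2‖ < 2 from by norm_num)
    filter_upwards [hev] with n hn
    rw [hSc n, norm_mul, norm_pow]
    calc ‖q‖^(2*n+1) * ‖(1 - q^(2*n+2)) * (1 - q^(2*n+4)) *
        (qPochInf (q^(2*n+6)) (q^2) / qPochInf (q^(2*n+1)) (q^2))^2‖
        ≤ ‖q‖^(2*n+1) * 2 := by
          apply mul_le_mul_of_nonneg_left hn (by positivity)
      _ = 2 * ‖q‖^(2*n+1) := by ring
  have hsum : Summable S := by
    apply Summable.of_norm_bounded_eventually_nat (g := fun n => 2 * ‖q‖^(2*n+1)) ?_ hbound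
    have hlt : ‖q‖^2 < 1 := by
      calc ‖q‖^2 ≤ ‖q‖^1 := pow_le_pow_of_le_one (norm_nonneg q) hq.le one_le_two
        _ = ‖q‖ := pow_one _
        _ < 1 := hq
    have hgeo : Summable (fun n : ℕ => (2*‖q‖) * (‖q‖^2)^n) :=
      (summable_geometric_of_lt_one (by positivity) hlt).mul_left _
    apply hgeo.congr
    intro n
    rw [show 2*n+1 = 1 + 2*n from by omega, pow_add, pow_one, ← pow_mul]
    ring
  have hA := hsum.hasSum.tendsto_sum_nat
  have hpart : ∀ N : ℕ, (1-q)*(1-q^3)^2 * ∑ n ∈ Finset.range N, S n = G 0 - G N := by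
    intro N
    rw [Finset.mul_sum, Finset.sum_congr rfl fun n _ => htel n]
    exact Finset.sum_range_sub' G N
  have hB : Tendsto (fun N => (1-q)*(1-q^3)^2 * ∑ n ∈ Finset.range N, S n) atTop
      (𝓝 (G 0 - (-q - q^2 - q^3 + q^4) * 1 ^ 2)) := by
    have h0 : Tendsto (fun _ : ℕ => G 0) atTop (𝓝 (G 0)) := tendsto_const_nhds
    exact (h0.sub hG).congr fun N => (hpart N).symm
  have hval : (1-q)*(1-q^3)^2 * (∑' n, S n) = G 0 - (-q - q^2 - q^3 + q^4) * 1 ^ 2 :=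
    tendsto_nhds_unique (hA.const_mul _) hB
  have hG0 : G 0 = 0 := by
    simp only [hGdef]
    rw [show 2*0+1 = 1 from by omega, pow_one, Fp_at_q, zero_mul]
  rw [hG0] at hval
  rw [eq_div_iff (mul_ne_zero hΔ1 (pow_ne_zero 2 hΔ3))]
  linear_combination hval
end

section
/- For |q|<1 and y, z with yz ≠ 0, y ≠ z, yz ≠ q (and the denominators nonzero): ∑_{n≥0} (y;q)_n (q/y;q)_n q^n / ((z;q)_{n+1} (q/z;q)_{n+1}) = 1/(y(1-z/y)(1-q/(yz))) + (y;q)_∞ (q/y;q)_∞ / (z(1-y/z)(1-q/(yz)) (z;q)_∞ (q/z;q)_∞). -/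
open scoped BigOperators

open Filter Topology

lemma multipliable_aux (a q : ℂ) (hq : ‖q‖ < 1) :
    Multipliable (fun j : ℕ => 1 - a * q ^ j) := by
  by_cases h : ∀ j : ℕ, 1 - a * q ^ j ≠ 0
  · refine Complex.multipliable_of_summable_log ?_
    have hgeo : Summable (fun n : ℕ => (3/2 : ℝ) * (‖a‖ * ‖q‖ ^ n)) :=
      ((summable_geometric_of_lt_one (norm_nonneg q) hq).mul_left ‖a‖).mul_left _
    refine Summable.of_norm_bounded_eventually_nat hgeo ?_
    have htend : Tendsto (fun n : ℕ => ‖a * q ^ n‖) atTop (𝓝 0) := by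
      have := (tendsto_pow_atTop_nhds_zero_of_norm_lt_one hq).const_mul a
      simpa using this.norm
    filter_upwards [htend.eventually_lt_const (by norm_num : (0:ℝ) < 1/2)] with n hn
    have h12 : ‖-(a * q ^ n)‖ ≤ 1/2 := by rw [norm_neg]; exact hn.le
    have := Complex.norm_log_one_add_half_le_self h12
    rw [norm_neg] at this
    calc ‖Complex.log (1 - a * q ^ n)‖
        = ‖Complex.log (1 + -(a * q ^ n))‖ := by rw [sub_eq_add_neg]
      _ ≤ 3/2 * ‖a * q ^ n‖ := this
      _ ≤ 3/2 * (‖a‖ * ‖q‖ ^ n) := by rw [norm_mul, norm_pow]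
  · push_neg at h
    obtain ⟨j0, hj0⟩ := h
    refine ⟨0, ?_⟩
    show Tendsto (fun s : Finset ℕ => ∏ i ∈ s, (1 - a * q ^ i)) atTop (𝓝 0)
    have hev : ∀ᶠ s : Finset ℕ in atTop, (0 : ℂ) = ∏ i ∈ s, (1 - a * q ^ i) := by
      filter_upwards [eventually_ge_atTop ({j0} : Finset ℕ)] with s hs
      exact (Finset.prod_eq_zero (hs (Finset.mem_singleton_self j0)) hj0).symm
    exact Tendsto.congr' hev tendsto_const_nhds

lemma tendsto_qPoch (a q : ℂ) (hq : ‖q‖ < 1) :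
    Tendsto (fun n => qPoch a q n) atTop (𝓝 (qPochInf a q)) :=
  (multipliable_aux a q hq).hasProd.tendsto_prod_nat

lemma expand_aux (A1 A2 B1 B2 E F G H c : ℂ) (hB1 : B1 ≠ 0) (hB2 : B2 ≠ 0)
    (hE : E ≠ 0) (hF : F ≠ 0) (hc : E * F - G * H = c) :
    A1 * A2 * c / (B1 * E * (B2 * F)) = A1 * A2 / (B1 * B2) - A1 * G * (A2 * H) / (B1 * E * (B2 * F)) := by
  rw [← hc]
  field_simp

set_option maxHeartbeats 1000000 in
theorem stmt_17 (q y z : ℂ) (hq : ‖q‖ < 1) (hyz : y * z ≠ 0) (hne : y ≠ z)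
    (hq' : y * z ≠ q)
    (hden : ∀ n : ℕ, qPoch z q (n + 1) * qPoch (q / z) q (n + 1) ≠ 0)
    (hdenInf : qPochInf z q * qPochInf (q / z) q ≠ 0) :
    (∑' n : ℕ, qPoch y q n * qPoch (q / y) q n * q ^ n /
        (qPoch z q (n + 1) * qPoch (q / z) q (n + 1))) =
      1 / (y * (1 - z / y) * (1 - q / (y * z))) +
        qPochInf y q * qPochInf (q / y) q /
          (z * (1 - y / z) * (1 - q / (y * z)) * qPochInf z q * qPochInf (q / z) q) := by
  have hy : y ≠ 0 := fun h => hyz (by simp [h])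
  have hz : z ≠ 0 := fun h => hyz (by simp [h])
  have hq1 : (1 : ℂ) - q / (y * z) ≠ 0 := by
    intro h
    apply hq'
    have : q / (y * z) = 1 := by linear_combination -h
    field_simp at this
    exact this.symm
  have hyzne : y - z ≠ 0 := sub_ne_zero.mpr hne
  set C : ℂ := (y - z) * (1 - q / (y * z)) with hCdef
  have hC : C ≠ 0 := mul_ne_zero hyzne hq1
  -- recursions
  have ez : ∀ n : ℕ, qPoch z q (n + 1) = qPoch z q n * (1 - z * q ^ n) := fun n =>
    Finset.prod_range_succ _ n
  have ez' : ∀ n : ℕ, qPoch (q / z) q (n + 1) = qPoch (q / z) q n * (1 - q / z * q ^ n) :=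
    fun n => Finset.prod_range_succ _ n
  have ey : ∀ n : ℕ, qPoch y q (n + 1) = qPoch y q n * (1 - y * q ^ n) := fun n =>
    Finset.prod_range_succ _ n
  have ey' : ∀ n : ℕ, qPoch (q / y) q (n + 1) = qPoch (q / y) q n * (1 - q / y * q ^ n) :=
    fun n => Finset.prod_range_succ _ n
  -- nonzeroness of z-side factors
  have hDz : ∀ n : ℕ, qPoch z q n ≠ 0 := by
    intro n
    have := hden n
    rw [ez n] at this
    exact fun h => this (by simp [h])
  have hDz' : ∀ n : ℕ, qPoch (q / z) q n ≠ 0 := by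
    intro n
    have := hden n
    rw [ez' n] at this
    exact fun h => this (by simp [h])
  have hfz : ∀ n : ℕ, (1 : ℂ) - z * q ^ n ≠ 0 := by
    intro n
    have := hden n
    rw [ez n] at this
    exact fun h => this (by simp [h])
  have hfz' : ∀ n : ℕ, (1 : ℂ) - q / z * q ^ n ≠ 0 := by
    intro n
    have := hden n
    rw [ez' n] at this
    exact fun h => this (by simp [h])
  set T : ℕ → ℂ := fun n => qPoch y q n * qPoch (q / y) q n / (qPoch z q n * qPoch (q / z) q n)
    with hTdef
  set f : ℕ → ℂ := fun n => qPoch y q n * qPoch (q / y) q n * q ^ n /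
      (qPoch z q (n + 1) * qPoch (q / z) q (n + 1)) with hfdef
  -- telescoping identity
  have key : ∀ n : ℕ, f n * C = T n - T (n + 1) := by
    intro n
    have hscal : (1 - z * q ^ n) * (1 - q / z * q ^ n) - (1 - y * q ^ n) * (1 - q / y * q ^ n)
        = q ^ n * C := by
      simp only [hCdef]
      field_simp
      ring
    have main := expand_aux (qPoch y q n) (qPoch (q / y) q n) (qPoch z q n) (qPoch (q / z) q n)
      (1 - z * q ^ n) (1 - q / z * q ^ n) (1 - y * q ^ n) (1 - q / y * q ^ n) (q ^ n * C)
      (hDz n) (hDz' n) (hfz n) (hfz' n) hscal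
    simp only [hfdef, hTdef, ez n, ez' n, ey n, ey' n]
    rw [div_mul_eq_mul_div, mul_assoc (qPoch y q n * qPoch (q / y) q n) (q ^ n) C]
    exact main
  -- limits of partial products
  have hq0 : Tendsto (fun n : ℕ => (q : ℂ) ^ n) atTop (𝓝 0) :=
    tendsto_pow_atTop_nhds_zero_of_norm_lt_one hq
  set L : ℂ := qPochInf y q * qPochInf (q / y) q / (qPochInf z q * qPochInf (q / z) q)
    with hLdef
  have hTtend : Tendsto T atTop (𝓝 L) := by
    exact (((tendsto_qPoch y q hq).mul (tendsto_qPoch (q / y) q hq)).div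
      ((tendsto_qPoch z q hq).mul (tendsto_qPoch (q / z) q hq)) hdenInf)
  -- boundedness of T
  obtain ⟨M1, hM1⟩ := (hTtend.norm).bddAbove_range
  have hM1' : ∀ n, ‖T n‖ ≤ M1 := fun n => hM1 ⟨n, rfl⟩
  have hM1nn : 0 ≤ M1 := le_trans (norm_nonneg _) (hM1' 0)
  -- boundedness of inverse factor
  set u : ℕ → ℂ := fun n => ((1 - z * q ^ n) * (1 - q / z * q ^ n))⁻¹ with hudef
  have hutend : Tendsto u atTop (𝓝 1) := by
    have h1 : Tendsto (fun n : ℕ => (1 : ℂ) - z * q ^ n) atTop (𝓝 1) := by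
      simpa using tendsto_const_nhds.sub (hq0.const_mul z)
    have h2 : Tendsto (fun n : ℕ => (1 : ℂ) - q / z * q ^ n) atTop (𝓝 1) := by
      simpa using tendsto_const_nhds.sub (hq0.const_mul (q / z))
    have h3 := (h1.mul h2).inv₀ (by norm_num : (1:ℂ) * 1 ≠ 0)
    rw [hudef]
    simpa using h3
  obtain ⟨M2, hM2⟩ := (hutend.norm).bddAbove_range
  have hM2' : ∀ n, ‖u n‖ ≤ M2 := fun n => hM2 ⟨n, rfl⟩
  -- representation f n = T n * u n * q^n
  have hrep : ∀ n : ℕ, f n = T n * u n * q ^ n := by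
    intro n
    simp only [hfdef, hTdef, hudef, ez n, ez' n]
    field_simp [hDz n, hDz' n, hfz n, hfz' n]
  -- summability
  have hsumm : Summable f := by
    refine Summable.of_norm_bounded (g := fun n : ℕ => M1 * M2 * ‖q‖ ^ n)
      ((summable_geometric_of_lt_one (norm_nonneg q) hq).mul_left _) ?_
    intro n
    rw [hrep n, norm_mul, norm_mul, norm_pow]
    have : ‖T n‖ * ‖u n‖ ≤ M1 * M2 :=
      mul_le_mul (hM1' n) (hM2' n) (norm_nonneg _) hM1nn
    exact mul_le_mul_of_nonneg_right this (pow_nonneg (norm_nonneg q) n)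
  -- partial sums
  have hpartial : ∀ N : ℕ, ∑ n ∈ Finset.range N, f n = (1 - T N) / C := by
    intro N
    rw [eq_div_iff hC, Finset.sum_mul]
    have h0 : T 0 = 1 := by simp [hTdef, qPoch]
    calc ∑ n ∈ Finset.range N, f n * C = ∑ n ∈ Finset.range N, (T n - T (n + 1)) :=
          Finset.sum_congr rfl fun n _ => key n
      _ = T 0 - T N := Finset.sum_range_sub' T N
      _ = 1 - T N := by rw [h0]
  have h1 : Tendsto (fun N => ∑ n ∈ Finset.range N, f n) atTop (𝓝 (∑' n, f n)) :=
    hsumm.hasSum.tendsto_sum_nat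
  have h2 : Tendsto (fun N => ∑ n ∈ Finset.range N, f n) atTop (𝓝 ((1 - L) / C)) := by
    simp only [hpartial]
    exact (tendsto_const_nhds.sub hTtend).div_const C
  have htsum : (∑' n, f n) = (1 - L) / C := tendsto_nhds_unique h1 h2
  rw [htsum]
  -- final algebra
  have hPz : qPochInf z q ≠ 0 := fun h => hdenInf (by simp [h])
  have hPz' : qPochInf (q / z) q ≠ 0 := fun h => hdenInf (by simp [h])
  have hzyne : z - y ≠ 0 := sub_ne_zero.mpr (Ne.symm hne)
  have h1zy : (1 : ℂ) - z / y ≠ 0 := by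
    rw [sub_ne_zero]
    intro h
    exact hne (by field_simp at h; exact h)
  have h1yz : (1 : ℂ) - y / z ≠ 0 := by
    rw [sub_ne_zero]
    intro h
    exact hne (by field_simp at h; exact h.symm)
  have e1 : y * (1 - z / y) * (1 - q / (y * z)) = C := by
    simp only [hCdef]
    field_simp
  have e2 : z * (1 - y / z) * (1 - q / (y * z)) * qPochInf z q * qPochInf (q / z) q
      = -(C * (qPochInf z q * qPochInf (q / z) q)) := by
    simp only [hCdef]
    field_simp
    ring
  rw [e1, e2, div_neg]
  simp only [hLdef]
  rw [sub_div, div_div, mul_comm (qPochInf z q * qPochInf (q / z) q) C, sub_eq_add_neg]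
end
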